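/- Let a > 0 and let B = {x ∈ ℝ³ : |x| < a} with Lebesgue measure. Let (Ω_j)_{j∈ℤ} be a family of essentially bounded measurable functions Ω_j : B → ℂ with Σ_{j∈ℤ}(1+|j|)·‖Ω_j‖_{L^∞(B)} < ∞. Then there is a constant C ≥ 0, depending only on (Ω_j), such that for every family (y_n)_{n∈ℤ} of functions y_n ∈ L²(B) with Σ_{n∈ℤ}(1+|n|)^{4/3}‖y_n‖²_{L²(B)} < ∞, the following hold: for each n the series Σ_{j∈ℤ} Ω_j·y_{n−j} converges in L²(B), and Σ_{n∈ℤ}(1+|n|)^{4/3}‖Σ_{j∈ℤ} Ω_j·y_{n−j}‖²_{L²(B)} ≤ C·Σ_{n∈ℤ}(1+|n|)^{4/3}‖y_n‖²_{L²(B)}. One may take C = (Σ_{j∈ℤ}(1+|j|)^{2/3}‖Ω_j‖_{L^∞(B)})². -/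

import Mathlib

open MeasureTheory
open scoped ENNReal NNReal

/-- The measure on `ℝ³` restricted to the ball of radius `a` centered at the origin. -/
noncomputable def ballMeasure (a : ℝ) : Measure (EuclideanSpace ℝ (Fin 3)) :=
  volume.restrict (Metric.ball (0 : EuclideanSpace ℝ (Fin 3)) a)

lemma enn_two_mul_le (a b : ℝ≥0∞) : 2 * (a * b) ≤ a ^ 2 + b ^ 2 := by
  by_cases ha : a = ⊤
  · subst ha
    have : (⊤ : ℝ≥0∞) ^ 2 = ⊤ := by simp [pow_two]
    simp [this]
  by_cases hb : b = ⊤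
  · subst hb
    have : (⊤ : ℝ≥0∞) ^ 2 = ⊤ := by simp [pow_two]
    simp [this]
  lift a to NNReal using ha
  lift b to NNReal using hb
  have h : (2 : ℝ≥0) * (a * b) ≤ a ^ 2 + b ^ 2 := by
    rw [← NNReal.coe_le_coe]
    push_cast
    nlinarith [sq_nonneg ((a : ℝ) - b)]
  calc (2 : ℝ≥0∞) * (↑a * ↑b) = ((2 * (a * b) : ℝ≥0) : ℝ≥0∞) := by push_cast; ring
    _ ≤ ((a ^ 2 + b ^ 2 : ℝ≥0) : ℝ≥0∞) := by exact_mod_cast h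
    _ = (↑a) ^ 2 + (↑b) ^ 2 := by push_cast; ring

/-- Discrete Young inequality `‖v ∗ u‖₂ ≤ ‖v‖₁ ‖u‖₂` in `ℝ≥0∞`, squared form. -/
lemma enn_conv (v u : ℤ → ℝ≥0∞) :
    (∑' n : ℤ, (∑' j : ℤ, v j * u (n - j)) ^ 2) ≤ (∑' j : ℤ, v j) ^ 2 * ∑' n : ℤ, u n ^ 2 := by
  set V := ∑' j : ℤ, v j with hV
  set U := ∑' n : ℤ, u n ^ 2 with hU
  have hshift : ∀ j : ℤ, (∑' n : ℤ, u (n - j) ^ 2) = U := by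
    intro j
    exact (Equiv.subRight j).tsum_eq (fun m => u m ^ 2)
  have expand : ∀ n : ℤ, (∑' j : ℤ, v j * u (n - j)) ^ 2
      = ∑' j : ℤ, ∑' k : ℤ, v j * v k * (u (n - j) * u (n - k)) := by
    intro n
    rw [sq, ← ENNReal.tsum_mul_right]
    refine tsum_congr fun j => ?_
    rw [← ENNReal.tsum_mul_left]
    exact tsum_congr fun k => by ring
  rw [← ENNReal.mul_le_mul_iff_left (two_ne_zero) (by norm_num : (2:ℝ≥0∞) ≠ ⊤)]
  calc (∑' n : ℤ, (∑' j : ℤ, v j * u (n - j)) ^ 2) * 2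
      = ∑' n : ℤ, ∑' j : ℤ, ∑' k : ℤ, v j * v k * (2 * (u (n - j) * u (n - k))) := by
        rw [← ENNReal.tsum_mul_right]
        refine tsum_congr fun n => ?_
        rw [expand n, ← ENNReal.tsum_mul_right]
        refine tsum_congr fun j => ?_
        rw [← ENNReal.tsum_mul_right]
        exact tsum_congr fun k => by ring
    _ ≤ ∑' n : ℤ, ∑' j : ℤ, ∑' k : ℤ, v j * v k * (u (n - j) ^ 2 + u (n - k) ^ 2) := by
        refine ENNReal.tsum_le_tsum fun n => ENNReal.tsum_le_tsum fun j =>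
          ENNReal.tsum_le_tsum fun k => ?_
        exact mul_le_mul_right (enn_two_mul_le _ _) _
    _ = ∑' j : ℤ, ∑' k : ℤ, ∑' n : ℤ, v j * v k * (u (n - j) ^ 2 + u (n - k) ^ 2) := by
        rw [ENNReal.tsum_comm]
        exact tsum_congr fun j => ENNReal.tsum_comm
    _ = ∑' j : ℤ, ∑' k : ℤ, v j * v k * (U + U) := by
        refine tsum_congr fun j => tsum_congr fun k => ?_
        rw [ENNReal.tsum_mul_left, ENNReal.tsum_add, hshift j, hshift k]
    _ = ∑' j : ℤ, v j * V * (U + U) := by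
        refine tsum_congr fun j => ?_
        rw [ENNReal.tsum_mul_right, ENNReal.tsum_mul_left, ← hV]
    _ = V ^ 2 * U * 2 := by
        rw [ENNReal.tsum_mul_right, ENNReal.tsum_mul_right, ← hV]
        ring

/-- Lemma 12: boundedness of the convolution-type operator `𝔖` on the weighted sequence
space `ℋ`: if `Σ_j (1+|j|)‖Ω_j‖_∞ < ∞` then, with
`C = (Σ_j (1+|j|)^{2/3}‖Ω_j‖_∞)²`, for every `(y_n)` with
`Σ_n (1+|n|)^{4/3}‖y_n‖₂² < ∞` the series `Σ_j Ω_j · y_{n-j}` converges in `L²(B)` to some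
`S n`, and `Σ_n (1+|n|)^{4/3}‖S n‖₂² ≤ C Σ_n (1+|n|)^{4/3}‖y_n‖₂²`. -/
theorem stmt_1 (a : ℝ) (ha : 0 < a) (Ω : ℤ → EuclideanSpace ℝ (Fin 3) → ℂ)
    (hΩmem : ∀ j : ℤ, MemLp (Ω j) ⊤ (ballMeasure a))
    (hΩsum : Summable fun j : ℤ => (1 + |j| : ℝ) * (eLpNorm (Ω j) ⊤ (ballMeasure a)).toReal) :
    ∃ C : ℝ, 0 ≤ C ∧
      C = (∑' j : ℤ, (1 + |j| : ℝ) ^ ((2 : ℝ) / 3) * (eLpNorm (Ω j) ⊤ (ballMeasure a)).toReal) ^ 2 ∧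
      ∀ y : ℤ → EuclideanSpace ℝ (Fin 3) → ℂ,
        (∀ n : ℤ, MemLp (y n) 2 (ballMeasure a)) →
        (Summable fun n : ℤ =>
          (1 + |n| : ℝ) ^ ((4 : ℝ) / 3) * (eLpNorm (y n) 2 (ballMeasure a)).toReal ^ 2) →
        ∃ S : ℤ → EuclideanSpace ℝ (Fin 3) → ℂ,
          (∀ n : ℤ, MemLp (S n) 2 (ballMeasure a) ∧
            Filter.Tendsto
              (fun F : Finset ℤ =>
                (eLpNorm (fun x => (∑ j ∈ F, Ω j x * y (n - j) x) - S n x) 2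
                  (ballMeasure a)).toReal)
              Filter.atTop (nhds 0)) ∧
          (Summable fun n : ℤ =>
            (1 + |n| : ℝ) ^ ((4 : ℝ) / 3) * (eLpNorm (S n) 2 (ballMeasure a)).toReal ^ 2) ∧
          (∑' n : ℤ, (1 + |n| : ℝ) ^ ((4 : ℝ) / 3) * (eLpNorm (S n) 2 (ballMeasure a)).toReal ^ 2) ≤
            C * ∑' n : ℤ,
              (1 + |n| : ℝ) ^ ((4 : ℝ) / 3) * (eLpNorm (y n) 2 (ballMeasure a)).toReal ^ 2 := by
  classical
  set μ := ballMeasure a with hμ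
  set K : ℤ → ℝ := fun j => (eLpNorm (Ω j) ⊤ μ).toReal with hKdef
  have hK0 : ∀ j, 0 ≤ K j := fun j => ENNReal.toReal_nonneg
  have hbase : ∀ n : ℤ, (1 : ℝ) ≤ 1 + ((|n| : ℤ) : ℝ) := fun n => le_add_of_nonneg_right (by positivity)
  have hbase0 : ∀ n : ℤ, (0 : ℝ) ≤ 1 + ((|n| : ℤ) : ℝ) := fun n => zero_le_one.trans (hbase n)
  set v : ℤ → ℝ := fun j => (1 + ((|j| : ℤ) : ℝ)) ^ ((2 : ℝ) / 3) * K j with hvdef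
  have hv0 : ∀ j, 0 ≤ v j := fun j =>
    mul_nonneg (Real.rpow_nonneg (hbase0 j) _) (hK0 j)
  have hvle : ∀ j, v j ≤ (1 + ((|j| : ℤ) : ℝ)) * K j := by
    intro j
    refine mul_le_mul_of_nonneg_right ?_ (hK0 j)
    calc (1 + ((|j| : ℤ) : ℝ)) ^ ((2 : ℝ) / 3) ≤ (1 + ((|j| : ℤ) : ℝ)) ^ (1 : ℝ) :=
          Real.rpow_le_rpow_of_exponent_le (hbase j) (by norm_num)
      _ = 1 + ((|j| : ℤ) : ℝ) := Real.rpow_one _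
  have hvsum : Summable v := Summable.of_nonneg_of_le hv0 hvle hΩsum
  have hKsum : Summable K :=
    Summable.of_nonneg_of_le hK0 (fun j => le_mul_of_one_le_left (hK0 j) (hbase j)) hΩsum
  set V : ℝ := ∑' j : ℤ, v j with hVdef
  have hV0 : 0 ≤ V := tsum_nonneg hv0
  refine ⟨V ^ 2, sq_nonneg V, rfl, ?_⟩
  intro y hy hysum
  set N : ℤ → ℝ := fun n => (eLpNorm (y n) 2 μ).toReal with hNdef
  have hN0 : ∀ n, 0 ≤ N n := fun n => ENNReal.toReal_nonneg
  set u : ℤ → ℝ := fun n => (1 + ((|n| : ℤ) : ℝ)) ^ ((2 : ℝ) / 3) * N n with hudef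
  have hu0 : ∀ n, 0 ≤ u n := fun n =>
    mul_nonneg (Real.rpow_nonneg (hbase0 n) _) (hN0 n)
  set T : ℝ := ∑' n : ℤ, (1 + ((|n| : ℤ) : ℝ)) ^ ((4 : ℝ) / 3) * N n ^ 2 with hTdef
  have hT0 : 0 ≤ T :=
    tsum_nonneg fun n => mul_nonneg (Real.rpow_nonneg (hbase0 n) _) (sq_nonneg _)
  have hsq23 : ∀ n : ℤ, ((1 + ((|n| : ℤ) : ℝ)) ^ ((2 : ℝ) / 3)) ^ 2 = (1 + ((|n| : ℤ) : ℝ)) ^ ((4 : ℝ) / 3) := by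
    intro n
    rw [← Real.rpow_natCast ((1 + ((|n| : ℤ) : ℝ)) ^ ((2 : ℝ) / 3)) 2, ← Real.rpow_mul (hbase0 n)]
    norm_num
  have husq : ∀ n, u n ^ 2 = (1 + ((|n| : ℤ) : ℝ)) ^ ((4 : ℝ) / 3) * N n ^ 2 := by
    intro n
    rw [hudef]
    simp only
    rw [mul_pow, hsq23 n]
  have hub : ∀ n, u n ≤ Real.sqrt T := by
    intro n
    have h1 : u n ^ 2 ≤ T := by
      rw [husq n]
      exact Summable.le_tsum hysum n fun m _ =>
        mul_nonneg (Real.rpow_nonneg (hbase0 m) _) (sq_nonneg _)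
    calc u n = Real.sqrt (u n ^ 2) := (Real.sqrt_sq (hu0 n)).symm
      _ ≤ Real.sqrt T := Real.sqrt_le_sqrt h1
  have hNle : ∀ n, N n ≤ u n := fun n =>
    le_mul_of_one_le_left (hN0 n) (Real.one_le_rpow (hbase n) (by norm_num))
  have hNb : ∀ n, N n ≤ Real.sqrt T := fun n => (hNle n).trans (hub n)
  -- products
  have hprod : ∀ j m : ℤ, MemLp (fun x => Ω j x * y m x) 2 μ := by
    intro j m
    have h := MemLp.smul (p := ⊤) (q := 2) (r := 2) (hy m) (hΩmem j)
    exact h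
  have hnorm : ∀ j m : ℤ, (eLpNorm (fun x => Ω j x * y m x) 2 μ).toReal ≤ K j * N m := by
    intro j m
    have h := eLpNorm_smul_le_eLpNorm_top_mul_eLpNorm (μ := μ) 2 (hy m).1 (Ω j)
    have hrhs : eLpNorm (Ω j) ⊤ μ * eLpNorm (y m) 2 μ ≠ ⊤ :=
      ENNReal.mul_ne_top (hΩmem j).eLpNorm_ne_top (hy m).eLpNorm_ne_top
    have h2 := ENNReal.toReal_mono hrhs h
    rwa [ENNReal.toReal_mul] at h2
  have hKNsummable : ∀ n : ℤ, Summable fun j => K j * N (n - j) := by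
    intro n
    refine Summable.of_nonneg_of_le (fun j => mul_nonneg (hK0 j) (hN0 _))
      (fun j => mul_le_mul_of_nonneg_left (hNb _) (hK0 j)) (hKsum.mul_right (Real.sqrt T))
  -- Lp elements
  let g : ℤ → ℤ → Lp ℂ 2 μ := fun n j => (hprod j (n - j)).toLp _
  have hgnorm : ∀ n j, ‖g n j‖ ≤ K j * N (n - j) := by
    intro n j
    rw [Lp.norm_toLp _ (hprod j (n - j))]
    exact hnorm j (n - j)
  have hgsum : ∀ n, Summable (g n) := fun n =>
    Summable.of_norm_bounded (hKNsummable n) (hgnorm n)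
  set SL : ℤ → Lp ℂ 2 μ := fun n => ∑' j, g n j with hSLdef
  refine ⟨fun n => ⇑(SL n), ?_, ?_⟩
  · -- convergence part
    intro n
    refine ⟨Lp.memLp (SL n), ?_⟩
    have hs : HasSum (g n) (SL n) := (hgsum n).hasSum
    have ht : Filter.Tendsto (fun F : Finset ℤ => ‖(∑ j ∈ F, g n j) - SL n‖)
        Filter.atTop (nhds 0) := tendsto_iff_norm_sub_tendsto_zero.mp hs
    refine ht.congr fun F => ?_
    have hcoe : ⇑(∑ j ∈ F, g n j) =ᵐ[μ] fun x => ∑ j ∈ F, Ω j x * y (n - j) x := by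
      induction F using Finset.induction_on with
      | empty =>
        simp only [Finset.sum_empty]
        exact Lp.coeFn_zero (E := ℂ) (p := 2) (μ := μ)
      | insert j F' hjF ih =>
        rw [Finset.sum_insert hjF]
        refine (Lp.coeFn_add _ _).trans ?_
        filter_upwards [ih, MemLp.coeFn_toLp (hprod j (n - j))] with x hx1 hx2
        simp only [Pi.add_apply, hx1, hx2, Finset.sum_insert hjF]
        exact congrArg (· + _) hx2
    rw [Lp.norm_def]
    congr 1
    refine eLpNorm_congr_ae ?_
    refine (Lp.coeFn_sub _ _).trans ?_
    filter_upwards [hcoe] with x hx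
    simp only [Pi.sub_apply]
    rw [hx]
  · -- estimates
    have hSLnormsummable : ∀ n, Summable fun j => ‖g n j‖ := fun n =>
      Summable.of_nonneg_of_le (fun j => norm_nonneg _) (hgnorm n) (hKNsummable n)
    have hSLnorm : ∀ n, ‖SL n‖ ≤ ∑' j, K j * N (n - j) := by
      intro n
      exact (norm_tsum_le_tsum_norm (hSLnormsummable n)).trans
        (Summable.tsum_le_tsum (hgnorm n) (hSLnormsummable n) (hKNsummable n))
    set c : ℤ → ℝ := fun n => ∑' j, v j * u (n - j) with hcdef
    have hcs : ∀ n, Summable fun j => v j * u (n - j) := by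
      intro n
      exact Summable.of_nonneg_of_le (fun j => mul_nonneg (hv0 j) (hu0 _))
        (fun j => mul_le_mul_of_nonneg_left (hub _) (hv0 j)) (hvsum.mul_right (Real.sqrt T))
    have hc0 : ∀ n, 0 ≤ c n := fun n => tsum_nonneg fun j => mul_nonneg (hv0 j) (hu0 _)
    have hkey : ∀ n j : ℤ, (1 + ((|n| : ℤ) : ℝ)) ^ ((2 : ℝ) / 3) * (K j * N (n - j))
        ≤ v j * u (n - j) := by
      intro n j
      have h1 : (1 + ((|n| : ℤ) : ℝ)) ≤ (1 + ((|j| : ℤ) : ℝ)) * (1 + ((|n - j| : ℤ) : ℝ)) := by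
        have habsZ : |n| ≤ |j| + |n - j| := by
          calc |n| = |j + (n - j)| := by ring_nf
            _ ≤ |j| + |n - j| := abs_add_le _ _
        have habs : ((|n| : ℤ) : ℝ) ≤ ((|j| : ℤ) : ℝ) + ((|n - j| : ℤ) : ℝ) := by
          exact_mod_cast habsZ
        have h0j : (0 : ℝ) ≤ ((|j| : ℤ) : ℝ) := by positivity
        have h0nj : (0 : ℝ) ≤ ((|n - j| : ℤ) : ℝ) := by positivity
        nlinarith
      have h2 : (1 + ((|n| : ℤ) : ℝ)) ^ ((2 : ℝ) / 3)
          ≤ (1 + ((|j| : ℤ) : ℝ)) ^ ((2 : ℝ) / 3) * (1 + ((|n - j| : ℤ) : ℝ)) ^ ((2 : ℝ) / 3) := by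
        rw [← Real.mul_rpow (hbase0 j) (hbase0 (n - j))]
        exact Real.rpow_le_rpow (hbase0 n) h1 (by norm_num)
      calc (1 + ((|n| : ℤ) : ℝ)) ^ ((2 : ℝ) / 3) * (K j * N (n - j))
          ≤ ((1 + ((|j| : ℤ) : ℝ)) ^ ((2 : ℝ) / 3) * (1 + ((|n - j| : ℤ) : ℝ)) ^ ((2 : ℝ) / 3))
            * (K j * N (n - j)) :=
            mul_le_mul_of_nonneg_right h2 (mul_nonneg (hK0 j) (hN0 _))
        _ = v j * u (n - j) := by rw [hvdef, hudef]; ring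
    have hA : ∀ n, (1 + ((|n| : ℤ) : ℝ)) ^ ((2 : ℝ) / 3) * ‖SL n‖ ≤ c n := by
      intro n
      calc (1 + ((|n| : ℤ) : ℝ)) ^ ((2 : ℝ) / 3) * ‖SL n‖
          ≤ (1 + ((|n| : ℤ) : ℝ)) ^ ((2 : ℝ) / 3) * ∑' j, K j * N (n - j) :=
            mul_le_mul_of_nonneg_left (hSLnorm n) (Real.rpow_nonneg (hbase0 n) _)
        _ = ∑' j, (1 + ((|n| : ℤ) : ℝ)) ^ ((2 : ℝ) / 3) * (K j * N (n - j)) := tsum_mul_left.symm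
        _ ≤ c n := Summable.tsum_le_tsum (hkey n) ((hKNsummable n).mul_left _) (hcs n)
    have hA2 : ∀ n, (1 + ((|n| : ℤ) : ℝ)) ^ ((4 : ℝ) / 3) * ‖SL n‖ ^ 2 ≤ c n ^ 2 := by
      intro n
      have h := pow_le_pow_left₀
        (mul_nonneg (Real.rpow_nonneg (hbase0 n) _) (norm_nonneg _)) (hA n) 2
      rwa [mul_pow, hsq23 n] at h
    -- ENNReal part
    set v' : ℤ → ℝ≥0∞ := fun j => ENNReal.ofReal (v j) with hv'def
    set u' : ℤ → ℝ≥0∞ := fun n => ENNReal.ofReal (u n) with hu'def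
    have hcv : ∀ n : ℤ, (∑' j, v' j * u' (n - j)) = ENNReal.ofReal (c n) := by
      intro n
      rw [hcdef]
      simp only
      rw [ENNReal.ofReal_tsum_of_nonneg (fun j => mul_nonneg (hv0 j) (hu0 _)) (hcs n)]
      exact tsum_congr fun j => (ENNReal.ofReal_mul (hv0 j)).symm
    have hVv : ∑' j, v' j = ENNReal.ofReal V := by
      rw [hVdef, ENNReal.ofReal_tsum_of_nonneg hv0 hvsum]
    have hUu : (∑' n : ℤ, u' n ^ 2) = ENNReal.ofReal T := by
      rw [hTdef, ENNReal.ofReal_tsum_of_nonneg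
        (fun n => mul_nonneg (Real.rpow_nonneg (hbase0 n) _) (sq_nonneg _)) hysum]
      refine tsum_congr fun n => ?_
      rw [← husq n, ← ENNReal.ofReal_pow (hu0 n)]
    have hfin : (∑' n : ℤ, ENNReal.ofReal (c n ^ 2)) ≤ ENNReal.ofReal (V ^ 2 * T) := by
      calc (∑' n : ℤ, ENNReal.ofReal (c n ^ 2))
          = ∑' n : ℤ, (∑' j, v' j * u' (n - j)) ^ 2 :=
            tsum_congr fun n => by rw [hcv n, ← ENNReal.ofReal_pow (hc0 n)]
        _ ≤ (∑' j, v' j) ^ 2 * ∑' n : ℤ, u' n ^ 2 := enn_conv v' u'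
        _ = ENNReal.ofReal (V ^ 2 * T) := by
            rw [hVv, hUu, ← ENNReal.ofReal_pow hV0, ← ENNReal.ofReal_mul (by positivity)]
    have hne : (∑' n : ℤ, ENNReal.ofReal (c n ^ 2)) ≠ ⊤ :=
      (hfin.trans_lt ENNReal.ofReal_lt_top).ne
    have hcsq_summable : Summable fun n => c n ^ 2 :=
      (ENNReal.summable_toReal hne).congr fun n => ENNReal.toReal_ofReal (sq_nonneg _)
    have hcsq_tsum : (∑' n : ℤ, c n ^ 2) ≤ V ^ 2 * T := by
      have h1 := ENNReal.toReal_mono ENNReal.ofReal_ne_top hfin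
      rw [ENNReal.toReal_ofReal (by positivity)] at h1
      rw [ENNReal.tsum_toReal_eq (fun n => ENNReal.ofReal_ne_top)] at h1
      calc (∑' n : ℤ, c n ^ 2) = ∑' n : ℤ, (ENNReal.ofReal (c n ^ 2)).toReal :=
            tsum_congr fun n => (ENNReal.toReal_ofReal (sq_nonneg _)).symm
        _ ≤ V ^ 2 * T := h1
    have hSnorm_eq : ∀ n, (eLpNorm (⇑(SL n)) 2 μ).toReal = ‖SL n‖ := fun n =>
      (Lp.norm_def (SL n)).symm
    have hSsummable : Summable fun n : ℤ =>
        (1 + ((|n| : ℤ) : ℝ)) ^ ((4 : ℝ) / 3) * (eLpNorm (⇑(SL n)) 2 μ).toReal ^ 2 := by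
      refine Summable.of_nonneg_of_le
        (fun n => mul_nonneg (Real.rpow_nonneg (hbase0 n) _) (sq_nonneg _))
        (fun n => ?_) hcsq_summable
      rw [hSnorm_eq n]
      exact hA2 n
    refine ⟨hSsummable, ?_⟩
    calc (∑' n : ℤ, (1 + ((|n| : ℤ) : ℝ)) ^ ((4 : ℝ) / 3) * (eLpNorm (⇑(SL n)) 2 μ).toReal ^ 2)
        ≤ ∑' n : ℤ, c n ^ 2 := by
          refine Summable.tsum_le_tsum (fun n => ?_) hSsummable hcsq_summable
          rw [hSnorm_eq n]
          exact hA2 n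
      _ ≤ V ^ 2 * T := hcsq_tsum
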